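/- Suppose the target SINR vector (γ_{i,j}) satisfies, for every cell i ∈ {1,…,N}, the strict inequality (1/N_t)·Σ_{k=1}^{K} γ_{i,k}/(1+γ_{i,k}) + (1/N_t)·Σ_{n≠i} Σ_{k=1}^{K} ((σ_max(n)/σ_{n,n,k})·γ_{n,k})/(1+(σ_max(n)/σ_{n,n,k})·γ_{n,k}) < 1, where σ_max(n) = max over i≠n and k ∈ {1,…,K} of σ_{i,n,k}. Then the target SINR vector is feasible for the ROBF algorithm: there exist positive reals μ_{i,j} and m̄_i (i ∈ {1,…,N}, j ∈ {1,…,K}) such that for every i, 1/m̄_i = (1/N_t)·Σ_{n=1}^{N} Σ_{k=1}^{K} σ_{i,n,k}μ_{n,k}/(1+σ_{i,n,k}μ_{n,k}·m̄_i) + 1, and for every i,j, γ_{i,j} = σ_{i,i,j}·μ_{i,j}·m̄_i. -/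

import Mathlib

open Finset

noncomputable section ROBFaux

private def rphi (x : ℝ) : ℝ := x / (1 + x)

private lemma rphi_nonneg {x : ℝ} (hx : 0 ≤ x) : 0 ≤ rphi x :=
  div_nonneg hx (by linarith)

private lemma rphi_mono {x y : ℝ} (hx : 0 ≤ x) (hxy : x ≤ y) : rphi x ≤ rphi y := by
  have h1 : (0:ℝ) < 1 + x := by linarith
  have h2 : (0:ℝ) < 1 + y := by linarith
  rw [rphi, rphi, div_le_div_iff₀ h1 h2]
  nlinarith

private def Hfun {N K : ℕ} (c : ℝ) (A : Fin N → Fin K → ℝ) (m : Fin N → ℝ) (t : ℝ) : ℝ :=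
  t + c * ∑ n, ∑ k, rphi (A n k * t / m n)

private lemma Hfun_continuousOn {N K : ℕ} {c δ : ℝ} (hδ : 0 < δ) (A : Fin N → Fin K → ℝ)
    (hA : ∀ n k, 0 < A n k) (m : Fin N → ℝ) (hm : ∀ n, 0 < m n) :
    ContinuousOn (Hfun c A m) (Set.Icc δ 1) := by
  unfold Hfun
  apply ContinuousOn.add continuousOn_id
  apply ContinuousOn.mul continuousOn_const
  apply continuousOn_finset_sum; intro n _
  apply continuousOn_finset_sum; intro k _
  unfold rphi
  apply ContinuousOn.div
  · fun_prop
  · fun_prop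
  · intro t ht
    have h0 : (0:ℝ) < t := lt_of_lt_of_le hδ ht.1
    have h1 : 0 < A n k * t / m n := div_pos (mul_pos (hA n k) h0) (hm n)
    intro h; linarith

private lemma Hfun_strictMono {N K : ℕ} {c : ℝ} (hc : 0 ≤ c) (A : Fin N → Fin K → ℝ)
    (hA : ∀ n k, 0 < A n k) (m : Fin N → ℝ) (hm : ∀ n, 0 < m n)
    {t t' : ℝ} (ht : 0 ≤ t) (htt : t < t') : Hfun c A m t < Hfun c A m t' := by
  unfold Hfun
  have hsum : ∑ n, ∑ k, rphi (A n k * t / m n) ≤ ∑ n, ∑ k, rphi (A n k * t' / m n) := by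
    apply Finset.sum_le_sum; intro n _
    apply Finset.sum_le_sum; intro k _
    apply rphi_mono (div_nonneg (mul_nonneg (hA n k).le ht) (hm n).le)
    gcongr
    · exact (hm n).le
    · exact (hA n k).le
  nlinarith [mul_le_mul_of_nonneg_left hsum hc]

private lemma Hfun_anti {N K : ℕ} {c : ℝ} (hc : 0 ≤ c) (A : Fin N → Fin K → ℝ)
    (hA : ∀ n k, 0 < A n k) {m m' : Fin N → ℝ} (hm : ∀ n, 0 < m n) (hmm : ∀ n, m n ≤ m' n)
    {t : ℝ} (ht : 0 ≤ t) : Hfun c A m' t ≤ Hfun c A m t := by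
  unfold Hfun
  have hsum : ∑ n, ∑ k, rphi (A n k * t / m' n) ≤ ∑ n, ∑ k, rphi (A n k * t / m n) := by
    apply Finset.sum_le_sum; intro n _
    apply Finset.sum_le_sum; intro k _
    have hmn := hm n
    have hmn' : 0 < m' n := lt_of_lt_of_le hmn (hmm n)
    apply rphi_mono (div_nonneg (mul_nonneg (hA n k).le ht) hmn'.le)
    exact div_le_div_of_nonneg_left (mul_nonneg (hA n k).le ht) hmn (hmm n)
  nlinarith [mul_le_mul_of_nonneg_left hsum hc]

private theorem robf_key {N K : ℕ} {c δ : ℝ} (hc : 0 < c) (hδ : 0 < δ) (hδ1 : δ ≤ 1)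
    (a : Fin N → Fin N → Fin K → ℝ) (ha : ∀ i n k, 0 < a i n k)
    (hbound : ∀ i, c * ∑ n, ∑ k, rphi (a i n k) ≤ 1 - δ) :
    ∃ m : Fin N → ℝ, (∀ n, δ ≤ m n ∧ m n ≤ 1) ∧ ∀ i, Hfun c (a i) m (m i) = 1 := by
  classical
  haveI : Fact (δ ≤ 1) := ⟨hδ1⟩
  have hsol : ∀ (m : Fin N → Set.Icc δ 1) (i : Fin N),
      ∃ t, t ∈ Set.Icc δ 1 ∧ Hfun c (a i) (fun n => (m n : ℝ)) t = 1 := by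
    intro m i
    have hm : ∀ n, 0 < ((m n : ℝ)) := fun n => lt_of_lt_of_le hδ (m n).2.1
    have hcont := Hfun_continuousOn (c := c) hδ (a i) (ha i) _ hm
    have h1 : Hfun c (a i) (fun n => (m n : ℝ)) δ ≤ 1 := by
      have hs : ∑ n, ∑ k, rphi (a i n k * δ / ((m n : ℝ))) ≤ ∑ n, ∑ k, rphi (a i n k) := by
        apply Finset.sum_le_sum; intro n _
        apply Finset.sum_le_sum; intro k _
        apply rphi_mono (div_nonneg (mul_nonneg (ha i n k).le hδ.le) (hm n).le)
        rw [div_le_iff₀ (hm n)]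
        nlinarith [(m n).2.1, ha i n k]
      have := mul_le_mul_of_nonneg_left hs hc.le
      have hb := hbound i
      unfold Hfun
      linarith
    have h2 : 1 ≤ Hfun c (a i) (fun n => (m n : ℝ)) 1 := by
      unfold Hfun
      have hs : 0 ≤ ∑ n, ∑ k, rphi (a i n k * 1 / ((m n : ℝ))) := by
        apply Finset.sum_nonneg; intro n _
        apply Finset.sum_nonneg; intro k _
        exact rphi_nonneg (div_nonneg (by nlinarith [ha i n k]) (hm n).le)
      nlinarith
    obtain ⟨t, ht, hteq⟩ := intermediate_value_Icc hδ1 hcont (Set.mem_Icc.mpr ⟨h1, h2⟩)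
    exact ⟨t, ht, hteq⟩
  let G : (Fin N → Set.Icc δ 1) →o (Fin N → Set.Icc δ 1) :=
    { toFun := fun m i => ⟨(hsol m i).choose, (hsol m i).choose_spec.1⟩
      monotone' := by
        intro m m' hmm i
        have hm : ∀ n, 0 < ((m n : ℝ)) := fun n => lt_of_lt_of_le hδ (m n).2.1
        obtain ⟨ht, hteq⟩ := (hsol m i).choose_spec
        obtain ⟨ht', hteq'⟩ := (hsol m' i).choose_spec
        show ((hsol m i).choose : ℝ) ≤ (hsol m' i).choose
        by_contra hlt
        push_neg at hlt
        have h3 : Hfun c (a i) (fun n => (m n : ℝ)) ((hsol m' i).choose)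
            < Hfun c (a i) (fun n => (m n : ℝ)) ((hsol m i).choose) :=
          Hfun_strictMono hc.le (a i) (ha i) _ hm (le_trans hδ.le ht'.1) hlt
        have h4 : Hfun c (a i) (fun n => ((m' n : ℝ))) ((hsol m' i).choose)
            ≤ Hfun c (a i) (fun n => (m n : ℝ)) ((hsol m' i).choose) :=
          Hfun_anti hc.le (a i) (ha i) hm (fun n => hmm n) (le_trans hδ.le ht'.1)
        rw [hteq] at h3
        rw [hteq'] at h4
        linarith }
  set mfix := OrderHom.lfp G with hmfixdef
  have hfix : G mfix = mfix := OrderHom.map_lfp G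
  refine ⟨fun n => (mfix n : ℝ), fun n => Set.mem_Icc.mp (mfix n).2, ?_⟩
  intro i
  have h1 : ((G mfix i : ℝ)) = (mfix i : ℝ) := by rw [hfix]
  have h2 := (hsol mfix i).choose_spec.2
  have h3 : ((G mfix i : ℝ)) = (hsol mfix i).choose := rfl
  rw [h3] at h1
  show Hfun c (a i) (fun n => ((mfix n : ℝ))) ((mfix i : ℝ)) = 1
  rw [← h1]
  exact h2

end ROBFaux

/-- Feasibility of the ROBF algorithm under the sufficient SINR condition. -/
theorem robf_feasibility
    (N K Nt : ℕ) (hN : 0 < N) (hK : 0 < K) (hNt : 0 < Nt)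
    (σ : Fin N → Fin N → Fin K → ℝ) (hσ : ∀ i n k, 0 < σ i n k)
    (γ : Fin N → Fin K → ℝ) (hγ : ∀ i j, 0 < γ i j)
    (σmax : Fin N → ℝ)
    (hσmax : ∀ n : Fin N, IsGreatest {x : ℝ | ∃ i k, i ≠ n ∧ σ i n k = x} (σmax n))
    (hfeas : ∀ i : Fin N,
      (1 / (Nt : ℝ)) * ∑ k, γ i k / (1 + γ i k)
        + (1 / (Nt : ℝ)) * ∑ n ∈ Finset.univ.filter (fun n => n ≠ i), ∑ k,
            (σmax n / σ n n k * γ n k) / (1 + σmax n / σ n n k * γ n k) < 1) :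
    ∃ (μ : Fin N → Fin K → ℝ) (m : Fin N → ℝ),
      (∀ i j, 0 < μ i j) ∧ (∀ i, 0 < m i) ∧
      (∀ i : Fin N, 1 / m i =
        (1 / (Nt : ℝ)) * ∑ n, ∑ k, σ i n k * μ n k / (1 + σ i n k * μ n k * m i) + 1) ∧
      (∀ i j, γ i j = σ i i j * μ i j * m i) := by
  classical
  have hNt' : (0:ℝ) < (Nt : ℝ) := by exact_mod_cast hNt
  set c : ℝ := 1 / (Nt : ℝ) with hcdef
  have hc : 0 < c := by positivity
  -- the uplink-power-normalized interference coefficients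
  set a : Fin N → Fin N → Fin K → ℝ := fun i n k => σ i n k / σ n n k * γ n k with hadef
  have ha : ∀ i n k, 0 < a i n k := fun i n k =>
    mul_pos (div_pos (hσ i n k) (hσ n n k)) (hγ n k)
  have haii : ∀ i k, a i i k = γ i k := by
    intro i k
    show σ i i k / σ i i k * γ i k = γ i k
    rw [div_self (hσ i i k).ne', one_mul]
  -- the per-cell slack
  set T : Fin N → ℝ := fun i =>
    c * ∑ k, rphi (γ i k)
      + c * ∑ n ∈ Finset.univ.filter (fun n => n ≠ i), ∑ k, rphi (σmax n / σ n n k * γ n k)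
      with hTdef
  have hT : ∀ i, T i < 1 := by
    intro i
    have := hfeas i
    rw [hTdef]
    simpa [rphi] using this
  have hT0 : ∀ i, 0 ≤ T i := by
    intro i
    rw [hTdef]
    have h1 : 0 ≤ ∑ k, rphi (γ i k) :=
      Finset.sum_nonneg fun k _ => rphi_nonneg (hγ i k).le
    have h2 : 0 ≤ ∑ n ∈ Finset.univ.filter (fun n => n ≠ i), ∑ k,
        rphi (σmax n / σ n n k * γ n k) := by
      apply Finset.sum_nonneg; intro n hn
      apply Finset.sum_nonneg; intro k _
      simp only [Finset.mem_filter] at hn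
      obtain ⟨j, l, hji, hjl⟩ := (hσmax n).1
      have hσm : 0 < σmax n := hjl ▸ hσ j n l
      exact rphi_nonneg (mul_pos (div_pos hσm (hσ n n k)) (hγ n k)).le
    positivity
  haveI : Nonempty (Fin N) := ⟨⟨0, hN⟩⟩
  set δ : ℝ := Finset.univ.inf' Finset.univ_nonempty (fun i => 1 - T i) with hδdef
  have hδpos : 0 < δ := by
    rw [hδdef]
    rw [Finset.lt_inf'_iff]
    exact fun i _ => by linarith [hT i]
  have hδle : ∀ i, δ ≤ 1 - T i := fun i => Finset.inf'_le _ (Finset.mem_univ i)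
  have hδ1 : δ ≤ 1 := le_trans (hδle (Classical.arbitrary (Fin N)))
    (by linarith [hT0 (Classical.arbitrary (Fin N))])
  -- the bound needed for the fixed-point lemma
  have hbound : ∀ i, c * ∑ n, ∑ k, rphi (a i n k) ≤ 1 - δ := by
    intro i
    refine le_trans ?_ (by linarith [hδle i] : T i ≤ 1 - δ)
    rw [hTdef]
    have hsplit : ∑ n, ∑ k, rphi (a i n k)
        = ∑ n ∈ Finset.univ.erase i, (∑ k, rphi (a i n k)) + ∑ k, rphi (a i i k) :=
      (Finset.sum_erase_add _ _ (Finset.mem_univ i)).symm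
    rw [hsplit]
    have hdiag : ∑ k, rphi (a i i k) = ∑ k, rphi (γ i k) := by
      apply Finset.sum_congr rfl; intro k _; rw [haii]
    have hoff : ∑ n ∈ Finset.univ.erase i, (∑ k, rphi (a i n k))
        ≤ ∑ n ∈ Finset.univ.filter (fun n => n ≠ i), ∑ k, rphi (σmax n / σ n n k * γ n k) := by
      rw [Finset.filter_ne']
      apply Finset.sum_le_sum; intro n hn
      apply Finset.sum_le_sum; intro k _
      have hni : n ≠ i := Finset.ne_of_mem_erase hn
      have hle : σ i n k ≤ σmax n := (hσmax n).2 ⟨i, k, hni.symm, rfl⟩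
      apply rphi_mono (ha i n k).le
      show σ i n k / σ n n k * γ n k ≤ σmax n / σ n n k * γ n k
      have := hσ n n k
      have := hγ n k
      gcongr
    rw [hdiag, mul_add]
    nlinarith [mul_le_mul_of_nonneg_left hoff hc.le]
  obtain ⟨m, hm, heq⟩ := robf_key hc hδpos hδ1 a ha hbound
  have hmpos : ∀ n, 0 < m n := fun n => lt_of_lt_of_le hδpos (hm n).1
  refine ⟨fun n k => γ n k / (σ n n k * m n), m,
    fun n k => div_pos (hγ n k) (mul_pos (hσ n n k) (hmpos n)), hmpos, ?_, ?_⟩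
  · intro i
    have hfp := heq i
    unfold Hfun at hfp
    have key : ∀ n k, σ i n k * (γ n k / (σ n n k * m n))
        / (1 + σ i n k * (γ n k / (σ n n k * m n)) * m i)
        = rphi (a i n k * m i / m n) / m i := by
      intro n k
      have h1 : (0:ℝ) < m n := hmpos n
      have h2 : (0:ℝ) < m i := hmpos i
      have h3 : (0:ℝ) < σ n n k := hσ n n k
      have ha' : (0:ℝ) < a i n k := ha i n k
      have hrval : σ i n k * (γ n k / (σ n n k * m n)) = a i n k / m n := by
        show σ i n k * (γ n k / (σ n n k * m n)) = σ i n k / σ n n k * γ n k / m n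
        field_simp
      have h4 : (0:ℝ) < 1 + a i n k / m n * m i := by
        have := mul_pos (div_pos ha' h1) h2; linarith
      have h5 : (0:ℝ) < 1 + a i n k * m i / m n := by
        have := div_pos (mul_pos ha' h2) h1; linarith
      have hden : (0:ℝ) < m n + a i n k * m i := by
        have := mul_pos ha' h2; linarith
      have e1 : a i n k / m n / (1 + a i n k / m n * m i)
          = a i n k / (m n + a i n k * m i) := by
        rw [div_eq_div_iff h4.ne' hden.ne']
        field_simp
      have e2 : rphi (a i n k * m i / m n) / m i
          = a i n k / (m n + a i n k * m i) := by
        rw [rphi, div_div, div_eq_div_iff (mul_pos h5 h2).ne' hden.ne']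
        field_simp
      rw [hrval, e1, e2]
    have hsum : ∑ n, ∑ k, σ i n k * (γ n k / (σ n n k * m n))
        / (1 + σ i n k * (γ n k / (σ n n k * m n)) * m i)
        = (∑ n, ∑ k, rphi (a i n k * m i / m n)) / m i := by
      rw [Finset.sum_div]
      apply Finset.sum_congr rfl; intro n _
      rw [Finset.sum_div]
      apply Finset.sum_congr rfl; intro k _
      exact key n k
    rw [hsum]
    have h2 : (0:ℝ) < m i := hmpos i
    field_simp
    have e : ∀ x x_1, m i * a i x x_1 / m x = a i x x_1 * m i / m x := fun _ _ => by ring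
    simp only [e]
    linarith
  · intro i j
    have h2 : (0:ℝ) < m i := hmpos i
    show γ i j = σ i i j * (γ i j / (σ i i j * m i)) * m i
    have hne : (σ i i j * m i) ≠ 0 := (mul_pos (hσ i i j) h2).ne'
    have hre : σ i i j * (γ i j / (σ i i j * m i)) * m i
        = γ i j / (σ i i j * m i) * (σ i i j * m i) := by ring
    rw [hre, div_mul_cancel₀ _ hne]
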